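/- Let G be a simple graph on a finite vertex type V (with decidable adjacency) such that every vertex has degree at most 2. Then there exists an orientation o of the edge set of G such that each vertex is the tail of at most one oriented edge and the head of at most one oriented edge; formally, there exists o : G.edgeSet → V × V with Sym2.mk ((o e).1, (o e).2) = e for every edge e, such that the map e ↦ (o e).1 is injective and the map e ↦ (o e).2 is injective. -/

import Mathlib

set_option linter.unusedSectionVars false

namespace OrientAux

variable {V : Type*} [DecidableEq V]

/-- number of edges of `E` incident to `v`. -/
def cnt (E : Finset (Sym2 V)) (v : V) : ℕ := (E.filter (fun e => v ∈ e)).card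

def Valid (E : Finset (Sym2 V)) (o : Sym2 V → V × V) : Prop :=
  (∀ e ∈ E, Sym2.mk (o e).1 (o e).2 = e) ∧
    Set.InjOn (fun e => (o e).1) (E : Set (Sym2 V)) ∧
    Set.InjOn (fun e => (o e).2) (E : Set (Sym2 V))

lemma fst_mem {o : Sym2 V → V × V} {f : Sym2 V} (h : Sym2.mk (o f).1 (o f).2 = f) : (o f).1 ∈ f := by
  have h2 : (o f).1 ∈ Sym2.mk (o f).1 (o f).2 := by
    exact Sym2.mem_mk_left _ _
  rwa [h] at h2

lemma snd_mem {o : Sym2 V → V × V} {f : Sym2 V} (h : Sym2.mk (o f).1 (o f).2 = f) : (o f).2 ∈ f := by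
  have h2 : (o f).2 ∈ Sym2.mk (o f).1 (o f).2 := by
    exact Sym2.mem_mk_right _ _
  rwa [h] at h2

lemma mk_out (e : Sym2 V) : Sym2.mk (Quot.out e).1 (Quot.out e).2 = e := Quot.out_eq e

lemma cnt_eq_zero {E : Finset (Sym2 V)} {v : V} (h : cnt E v = 0) :
    ∀ f ∈ E, v ∉ f := by
  intro f hf
  have := Finset.card_eq_zero.mp h
  intro hv
  have : f ∈ E.filter (fun e => v ∈ e) := Finset.mem_filter.mpr ⟨hf, hv⟩
  simp_all

lemma cnt_erase {E : Finset (Sym2 V)} {e : Sym2 V} (he : e ∈ E) {v : V} (hv : v ∈ e) :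
    cnt (E.erase e) v = cnt E v - 1 := by
  unfold cnt
  rw [Finset.filter_erase, Finset.card_erase_of_mem (Finset.mem_filter.mpr ⟨he, hv⟩)]

lemma cnt_erase_le {E : Finset (Sym2 V)} {e : Sym2 V} (v : V) :
    cnt (E.erase e) v ≤ cnt E v := by
  unfold cnt
  rw [Finset.filter_erase]
  exact (Finset.card_erase_le).trans le_rfl

/-- Key extension step. -/
lemma step {E : Finset (Sym2 V)} {e : Sym2 V} (he : e ∈ E) {x y : V}
    (hxy : Sym2.mk x y = e) {o' : Sym2 V → V × V} (h' : Valid (E.erase e) o')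
    (hx : ∀ f ∈ E.erase e, (o' f).1 ≠ x) (hy : ∀ f ∈ E.erase e, (o' f).2 ≠ y) :
    Valid E (Function.update o' e (x, y)) := by
  obtain ⟨hc, hi1, hi2⟩ := h'
  refine ⟨?_, ?_, ?_⟩
  · intro f hf
    by_cases hfe : f = e
    · subst hfe; rw [Function.update_self]; exact hxy
    · rw [Function.update_of_ne hfe]; exact hc f (Finset.mem_erase.mpr ⟨hfe, hf⟩)
  · intro f hf g hg hfg
    simp only [Finset.mem_coe] at hf hg
    by_cases hfe : f = e <;> by_cases hge : g = e
    · rw [hfe, hge]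
    · exfalso
      subst hfe
      simp only [Function.update_self, Function.update_of_ne hge] at hfg
      exact hx g (Finset.mem_erase.mpr ⟨hge, hg⟩) hfg.symm
    · exfalso
      subst hge
      simp only [Function.update_self, Function.update_of_ne hfe] at hfg
      exact hx f (Finset.mem_erase.mpr ⟨hfe, hf⟩) hfg
    · simp only [Function.update_of_ne hfe, Function.update_of_ne hge] at hfg
      exact hi1 (Finset.mem_coe.mpr (Finset.mem_erase.mpr ⟨hfe, hf⟩))
        (Finset.mem_coe.mpr (Finset.mem_erase.mpr ⟨hge, hg⟩)) hfg
  · intro f hf g hg hfg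
    simp only [Finset.mem_coe] at hf hg
    by_cases hfe : f = e <;> by_cases hge : g = e
    · rw [hfe, hge]
    · exfalso
      subst hfe
      simp only [Function.update_self, Function.update_of_ne hge] at hfg
      exact hy g (Finset.mem_erase.mpr ⟨hge, hg⟩) hfg.symm
    · exfalso
      subst hge
      simp only [Function.update_self, Function.update_of_ne hfe] at hfg
      exact hy f (Finset.mem_erase.mpr ⟨hfe, hf⟩) hfg
    · simp only [Function.update_of_ne hfe, Function.update_of_ne hge] at hfg
      exact hi2 (Finset.mem_coe.mpr (Finset.mem_erase.mpr ⟨hfe, hf⟩))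
        (Finset.mem_coe.mpr (Finset.mem_erase.mpr ⟨hge, hg⟩)) hfg

/-- The main mutual induction. -/
lemma main : ∀ n : ℕ, ∀ E : Finset (Sym2 V), E.card ≤ n →
    (∀ e ∈ E, ¬ e.IsDiag) → (∀ v, cnt E v ≤ 2) →
    (∃ o, Valid E o) ∧
      (∀ a b : V, a ≠ b → cnt E a ≤ 1 → cnt E b ≤ 1 →
        ∃ o, Valid E o ∧ (∀ f ∈ E, (o f).1 ≠ a) ∧ (∀ f ∈ E, (o f).2 ≠ b)) := by
  intro n
  induction n with
  | zero =>
    intro E hcard _ _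
    have hE : E = ∅ := Finset.card_eq_zero.mp (Nat.le_zero.mp hcard)
    subst hE
    exact ⟨⟨fun e => Quot.out e, by simp, by simp [Set.InjOn], by simp [Set.InjOn]⟩,
      fun a b _ _ _ => ⟨fun e => Quot.out e,
        ⟨by simp, by simp [Set.InjOn], by simp [Set.InjOn]⟩, by simp, by simp⟩⟩
  | succ n ih =>
    intro E hcard hdiag hcnt
    rcases eq_or_ne E ∅ with rfl | hne
    · exact ⟨⟨fun e => Quot.out e, by simp, by simp [Set.InjOn], by simp [Set.InjOn]⟩,
        fun a b _ _ _ => ⟨fun e => Quot.out e,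
          ⟨by simp, by simp [Set.InjOn], by simp [Set.InjOn]⟩, by simp, by simp⟩⟩
    -- First establish statement T.
    have hT : ∃ o, Valid E o := by
      obtain ⟨e, he⟩ := Finset.nonempty_iff_ne_empty.mpr hne
      have hae : e.out.1 ∈ e := Sym2.out_fst_mem e
      obtain ⟨a, hae⟩ : ∃ a, a ∈ e := ⟨_, hae⟩
      obtain ⟨b, hspec, hbmem, hba⟩ : ∃ b, Sym2.mk a b = e ∧ b ∈ e ∧ b ≠ a :=
        ⟨_, Sym2.other_spec hae, Sym2.other_mem hae, Sym2.other_ne (hdiag e he) hae⟩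
      have hcard' : (E.erase e).card ≤ n := by
        rw [Finset.card_erase_of_mem he]
        have := Finset.card_pos.mpr ⟨e, he⟩
        omega
      have hdiag' : ∀ f ∈ E.erase e, ¬ f.IsDiag :=
        fun f hf => hdiag f (Finset.mem_of_mem_erase hf)
      have hcnt' : ∀ v, cnt (E.erase e) v ≤ 2 := fun v => (cnt_erase_le v).trans (hcnt v)
      have hca : cnt (E.erase e) a ≤ 1 := by
        rw [cnt_erase he hae]; have := hcnt a; omega
      have hcb : cnt (E.erase e) b ≤ 1 := by
        rw [cnt_erase he hbmem]; have := hcnt b; omega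
      obtain ⟨o', ho', hna, hnb⟩ :=
        (ih (E.erase e) hcard' hdiag' hcnt').2 a b (Ne.symm hba) hca hcb
      exact ⟨_, step he hspec ho' hna hnb⟩
    refine ⟨hT, ?_⟩
    -- Now statement S.
    intro a b hab ha hb
    rcases Nat.eq_zero_or_pos (cnt E a) with ha0 | hapos
    · rcases Nat.eq_zero_or_pos (cnt E b) with hb0 | hbpos
      · -- both isolated: any valid orientation works
        obtain ⟨o, ho⟩ := hT
        refine ⟨o, ho, ?_, ?_⟩
        · intro f hf h
          exact cnt_eq_zero ha0 f hf (h ▸ fst_mem (ho.1 f hf))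
        · intro f hf h
          exact cnt_eq_zero hb0 f hf (h ▸ snd_mem (ho.1 f hf))
      · -- a isolated, b has a unique edge e = s(b, d)
        obtain ⟨e, hmem⟩ := Finset.card_pos.mp hbpos
        rw [Finset.mem_filter] at hmem
        obtain ⟨he, hbe⟩ := hmem
        obtain ⟨d, hspec, hdmem, hdb⟩ : ∃ d, Sym2.mk b d = e ∧ d ∈ e ∧ d ≠ b :=
          ⟨_, Sym2.other_spec hbe, Sym2.other_mem hbe, Sym2.other_ne (hdiag e he) hbe⟩
        have hda : d ≠ a := by
          rintro rfl
          exact cnt_eq_zero ha0 e he hdmem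
        have hcard' : (E.erase e).card ≤ n := by
          rw [Finset.card_erase_of_mem he]
          have := Finset.card_pos.mpr ⟨e, he⟩
          omega
        have hdiag' : ∀ f ∈ E.erase e, ¬ f.IsDiag :=
          fun f hf => hdiag f (Finset.mem_of_mem_erase hf)
        have hcnt' : ∀ v, cnt (E.erase e) v ≤ 2 := fun v => (cnt_erase_le v).trans (hcnt v)
        have ha' : cnt (E.erase e) a ≤ 1 := (cnt_erase_le a).trans ha
        have hd' : cnt (E.erase e) d ≤ 1 := by
          rw [cnt_erase he hdmem]; have := hcnt d; omega
        have hb0' : cnt (E.erase e) b = 0 := by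
          rw [cnt_erase he hbe]; omega
        obtain ⟨o', ho', hna, hnd⟩ :=
          (ih (E.erase e) hcard' hdiag' hcnt').2 a d hda.symm ha' hd'
        have hnb : ∀ f ∈ E.erase e, (o' f).1 ≠ b := by
          intro f hf h
          exact cnt_eq_zero hb0' f hf (h ▸ fst_mem (ho'.1 f hf))
        refine ⟨Function.update o' e (b, d), step he hspec ho' hnb hnd, ?_, ?_⟩
        · intro f hf
          by_cases hfe : f = e
          · subst hfe; rw [Function.update_self]; exact fun h => hab h.symm
          · rw [Function.update_of_ne hfe]
            intro h
            exact cnt_eq_zero ha0 f hf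
              (h ▸ fst_mem (ho'.1 f (Finset.mem_erase.mpr ⟨hfe, hf⟩)))
        · intro f hf
          by_cases hfe : f = e
          · subst hfe; rw [Function.update_self]; exact hdb
          · rw [Function.update_of_ne hfe]
            intro h
            exact cnt_eq_zero hb0' f (Finset.mem_erase.mpr ⟨hfe, hf⟩)
              (h ▸ snd_mem (ho'.1 f (Finset.mem_erase.mpr ⟨hfe, hf⟩)))
    · -- a has a unique edge e = s(a, c)
      obtain ⟨e, hmem⟩ := Finset.card_pos.mp hapos
      rw [Finset.mem_filter] at hmem
      obtain ⟨he, hae⟩ := hmem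
      obtain ⟨c, hspec, hcmem, hca⟩ : ∃ c, Sym2.mk a c = e ∧ c ∈ e ∧ c ≠ a :=
        ⟨_, Sym2.other_spec hae, Sym2.other_mem hae, Sym2.other_ne (hdiag e he) hae⟩
      have hcard' : (E.erase e).card ≤ n := by
        rw [Finset.card_erase_of_mem he]
        have := Finset.card_pos.mpr ⟨e, he⟩
        omega
      have hdiag' : ∀ f ∈ E.erase e, ¬ f.IsDiag :=
        fun f hf => hdiag f (Finset.mem_of_mem_erase hf)
      have hcnt' : ∀ v, cnt (E.erase e) v ≤ 2 := fun v => (cnt_erase_le v).trans (hcnt v)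
      have ha0' : cnt (E.erase e) a = 0 := by
        rw [cnt_erase he hae]; omega
      have hnota : ∀ (o' : Sym2 V → V × V), Valid (E.erase e) o' →
          (∀ f ∈ E.erase e, (o' f).1 ≠ a) ∧ (∀ f ∈ E.erase e, (o' f).2 ≠ a) := by
        intro o' ho'
        constructor
        · intro f hf h; exact cnt_eq_zero ha0' f hf (h ▸ fst_mem (ho'.1 f hf))
        · intro f hf h; exact cnt_eq_zero ha0' f hf (h ▸ snd_mem (ho'.1 f hf))
      have hspec' : Sym2.mk c a = e := by rw [Sym2.eq_swap]; exact hspec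
      rcases eq_or_ne c b with rfl | hcb
      · -- e = s(a, b): orient it b → a, rest arbitrary
        have hc' : cnt (E.erase e) c = 0 := by
          rw [cnt_erase he hcmem]; omega
        obtain ⟨o', ho'⟩ := (ih (E.erase e) hcard' hdiag' hcnt').1
        have hnc1 : ∀ f ∈ E.erase e, (o' f).1 ≠ c := by
          intro f hf h; exact cnt_eq_zero hc' f hf (h ▸ fst_mem (ho'.1 f hf))
        refine ⟨Function.update o' e (c, a),
          step he hspec' ho' hnc1 (hnota o' ho').2, ?_, ?_⟩
        · intro f hf
          by_cases hfe : f = e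
          · subst hfe; rw [Function.update_self]; exact hca
          · rw [Function.update_of_ne hfe]
            exact (hnota o' ho').1 f (Finset.mem_erase.mpr ⟨hfe, hf⟩)
        · intro f hf
          by_cases hfe : f = e
          · subst hfe; rw [Function.update_self]; exact hab
          · rw [Function.update_of_ne hfe]
            intro h
            exact cnt_eq_zero hc' f (Finset.mem_erase.mpr ⟨hfe, hf⟩)
              (h ▸ snd_mem (ho'.1 f (Finset.mem_erase.mpr ⟨hfe, hf⟩)))
      · -- e = s(a, c), c ≠ b: recurse with (c, b), orient e as c → a
        have hc' : cnt (E.erase e) c ≤ 1 := by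
          rw [cnt_erase he hcmem]; have := hcnt c; omega
        have hb' : cnt (E.erase e) b ≤ 1 := (cnt_erase_le b).trans hb
        obtain ⟨o', ho', hnc, hnb⟩ :=
          (ih (E.erase e) hcard' hdiag' hcnt').2 c b hcb hc' hb'
        refine ⟨Function.update o' e (c, a),
          step he hspec' ho' hnc (hnota o' ho').2, ?_, ?_⟩
        · intro f hf
          by_cases hfe : f = e
          · subst hfe; rw [Function.update_self]; exact hca
          · rw [Function.update_of_ne hfe]
            exact (hnota o' ho').1 f (Finset.mem_erase.mpr ⟨hfe, hf⟩)
        · intro f hf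
          by_cases hfe : f = e
          · subst hfe; rw [Function.update_self]; exact hab
          · rw [Function.update_of_ne hfe]
            exact hnb f (Finset.mem_erase.mpr ⟨hfe, hf⟩)

end OrientAux

/-- A graph of maximum degree at most two admits an orientation of its edges in which
every vertex is the tail of at most one oriented edge and the head of at most one
oriented edge. -/
theorem exists_orientation_of_degree_le_two {V : Type*} [Fintype V] [DecidableEq V]
    (G : SimpleGraph V) [DecidableRel G.Adj]
    (hdeg : ∀ v : V, G.degree v ≤ 2) :
    ∃ o : G.edgeSet → V × V,
      (∀ e : G.edgeSet, Sym2.mk (o e).1 (o e).2 = (e : Sym2 V)) ∧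
      Function.Injective (fun e : G.edgeSet => (o e).1) ∧
      Function.Injective (fun e : G.edgeSet => (o e).2) := by
  classical
  have hcnt : ∀ v, OrientAux.cnt G.edgeFinset v ≤ 2 := by
    intro v
    have h1 : OrientAux.cnt G.edgeFinset v = G.degree v := by
      rw [← G.card_incidenceFinset_eq_degree (v := v)]
      unfold OrientAux.cnt
      congr 1
      exact (G.incidenceFinset_eq_filter v).symm
    rw [h1]; exact hdeg v
  have hdiag : ∀ e ∈ G.edgeFinset, ¬ e.IsDiag := fun e he =>
    G.not_isDiag_of_mem_edgeSet (SimpleGraph.mem_edgeFinset.mp he)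
  obtain ⟨⟨o, hcons, hi1, hi2⟩, -⟩ :=
    OrientAux.main G.edgeFinset.card G.edgeFinset le_rfl hdiag hcnt
  refine ⟨fun e => o e.1, ?_, ?_, ?_⟩
  · intro e
    exact hcons e.1 (SimpleGraph.mem_edgeFinset.mpr e.2)
  · intro e f h
    exact Subtype.ext (hi1 (Finset.mem_coe.mpr (SimpleGraph.mem_edgeFinset.mpr e.2))
      (Finset.mem_coe.mpr (SimpleGraph.mem_edgeFinset.mpr f.2)) h)
  · intro e f h
    exact Subtype.ext (hi2 (Finset.mem_coe.mpr (SimpleGraph.mem_edgeFinset.mpr e.2))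
      (Finset.mem_coe.mpr (SimpleGraph.mem_edgeFinset.mpr f.2)) h)
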